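/- arXiv:2604.17907 — 3 statements merged into one kernel-verified Lean document; each statement's English description precedes it below -/
import Mathlib

section
/- Let H be a finite simple graph on N vertices with Laplacian eigenvalues λ_1(H) ≤ ⋯ ≤ λ_N(H), let m ≥ 2 be an integer, and let G be the graph obtained from H by attaching m−1 new pendant vertices to each vertex of H (so G has vertex set V(H) ∪ (V(H) × {1,…,m−1}), with u,v ∈ V(H) adjacent in G iff they are adjacent in H, each v ∈ V(H) adjacent to (v,r) for 1 ≤ r ≤ m−1, and no other edges). Define θ₋(λ) = (m + λ − √((m+λ)² − 4λ))/2 and θ₊(λ) = (m + λ + √((m+λ)² − 4λ))/2. Then the multiset of Laplacian eigenvalues of G equals {1 with multiplicity N(m−2)} together with the multiset {θ₋(λ_i(H)), θ₊(λ_i(H)) : 1 ≤ i ≤ N}. -/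
open Matrix SimpleGraph

attribute [local instance] Classical.propDecidable

/-- The corona `H ∘ K̄ₖ`: attach `k` new pendant vertices to every vertex of `H`.
Vertices are `V ⊕ V × Fin k`; `inl u ~ inl v` iff `H.Adj u v`, and `inl v ~ inr (v, r)`. -/
def corona {V : Type*} (H : SimpleGraph V) (k : ℕ) :
    SimpleGraph (V ⊕ V × Fin k) where
  Adj x y :=
    match x, y with
    | Sum.inl u, Sum.inl v => H.Adj u v
    | Sum.inl u, Sum.inr (v, _) => u = v
    | Sum.inr (u, _), Sum.inl v => u = v
    | Sum.inr _, Sum.inr _ => False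
  symm := by
    exact ⟨by rintro (u | ⟨u, r⟩) (v | ⟨v, s⟩) h <;> simp_all [SimpleGraph.adj_comm]⟩
  loopless := by
    exact ⟨by rintro (u | ⟨u, r⟩) h <;> simp_all⟩

/-- `θ₋(λ) = (m + λ − √((m+λ)² − 4λ))/2`. -/
noncomputable def thetaMinus (m : ℕ) (lam : ℝ) : ℝ :=
  (m + lam - Real.sqrt ((m + lam) ^ 2 - 4 * lam)) / 2

/-- `θ₊(λ) = (m + λ + √((m+λ)² − 4λ))/2`. -/
noncomputable def thetaPlus (m : ℕ) (lam : ℝ) : ℝ :=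
  (m + lam + Real.sqrt ((m + lam) ^ 2 - 4 * lam)) / 2

open Polynomial

lemma corona_adj_inl_inl {V : Type*} (H : SimpleGraph V) (k : ℕ) (u v : V) :
    (corona H k).Adj (Sum.inl u) (Sum.inl v) ↔ H.Adj u v := Iff.rfl

lemma corona_adj_inl_inr {V : Type*} (H : SimpleGraph V) (k : ℕ) (u v : V) (r : Fin k) :
    (corona H k).Adj (Sum.inl u) (Sum.inr (v, r)) ↔ u = v := Iff.rfl

lemma corona_adj_inr_inl {V : Type*} (H : SimpleGraph V) (k : ℕ) (u v : V) (r : Fin k) :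
    (corona H k).Adj (Sum.inr (u, r)) (Sum.inl v) ↔ u = v := Iff.rfl

lemma corona_adj_inr_inr {V : Type*} (H : SimpleGraph V) (k : ℕ) (p q : V × Fin k) :
    ¬ (corona H k).Adj (Sum.inr p) (Sum.inr q) := by
  obtain ⟨u, r⟩ := p; obtain ⟨v, s⟩ := q; exact fun h => h

lemma corona_degree_inl {V : Type*} [Fintype V] (H : SimpleGraph V) (k : ℕ) (v : V) :
    ((corona H k).degree (Sum.inl v) : ℝ) = H.degree v + k := by
  rw [SimpleGraph.degree_eq_sum_if_adj, Fintype.sum_sum_type]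
  have h1 : (∑ u : V, if (corona H k).Adj (Sum.inl v) (Sum.inl u) then (1 : ℝ) else 0)
      = H.degree v := by
    rw [SimpleGraph.degree_eq_sum_if_adj]
    exact Finset.sum_congr rfl fun u _ => by simp [corona_adj_inl_inl]
  have h2 : (∑ p : V × Fin k, if (corona H k).Adj (Sum.inl v) (Sum.inr p) then (1 : ℝ) else 0)
      = k := by
    rw [Fintype.sum_prod_type]
    have h3 : ∀ u : V,
        (∑ _r : Fin k, if (corona H k).Adj (Sum.inl v) (Sum.inr (u, _r)) then (1:ℝ) else 0)
        = if v = u then (k : ℝ) else 0 := by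
      intro u
      by_cases h : v = u <;> simp [corona_adj_inl_inr, h]
    simp only [h3]
    simp
  rw [h1, h2]

lemma corona_degree_inr {V : Type*} [Fintype V] (H : SimpleGraph V) (k : ℕ) (p : V × Fin k) :
    ((corona H k).degree (Sum.inr p) : ℝ) = 1 := by
  obtain ⟨v, r⟩ := p
  rw [SimpleGraph.degree_eq_sum_if_adj, Fintype.sum_sum_type]
  have h1 : (∑ u : V, if (corona H k).Adj (Sum.inr (v, r)) (Sum.inl u) then (1 : ℝ) else 0)
      = 1 := by simp [corona_adj_inr_inl]
  have h2 : (∑ q : V × Fin k, if (corona H k).Adj (Sum.inr (v, r)) (Sum.inr q) then (1:ℝ) else 0)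
      = 0 := by simp [corona_adj_inr_inr]
  rw [h1, h2, add_zero]

lemma corona_block {V : Type*} [Fintype V] [DecidableEq V] (H : SimpleGraph V) (k : ℕ) (x : ℝ) :
    Matrix.diagonal (fun _ : V ⊕ V × Fin k => x) - (corona H k).lapMatrix ℝ
      = Matrix.fromBlocks
          (Matrix.diagonal (fun _ : V => x - k) - H.lapMatrix ℝ)
          (Matrix.of fun (u : V) (p : V × Fin k) => if u = p.1 then (1:ℝ) else 0)
          (Matrix.of fun (p : V × Fin k) (u : V) => if p.1 = u then (1:ℝ) else 0)
          (Matrix.diagonal (fun _ : V × Fin k => x - 1)) := by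
  ext (u | ⟨u, r⟩) (v | ⟨v, s⟩)
  · by_cases h : u = v
    · subst h
      simp only [Matrix.sub_apply, Matrix.diagonal_apply_eq, SimpleGraph.lapMatrix,
        SimpleGraph.degMatrix, SimpleGraph.adjMatrix_apply, Matrix.fromBlocks_apply₁₁]
      rw [corona_degree_inl]
      simp only [corona_adj_inl_inl, SimpleGraph.irrefl, if_false]
      -- push_cast removed
      ring
    · simp only [Matrix.sub_apply, Matrix.diagonal_apply_ne _ (by simp [h] : Sum.inl u ≠ Sum.inl v),
        Matrix.diagonal_apply_ne _ h, SimpleGraph.lapMatrix, SimpleGraph.degMatrix,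
        Matrix.sub_apply, Matrix.diagonal_apply_ne _ (by simp [h] : Sum.inl u ≠ Sum.inl v),
        SimpleGraph.adjMatrix_apply, Matrix.fromBlocks_apply₁₁]
      simp [corona_adj_inl_inl]
  · simp only [Matrix.sub_apply, Matrix.diagonal_apply_ne _ (by simp : Sum.inl u ≠ Sum.inr (v, s)),
      SimpleGraph.lapMatrix, SimpleGraph.degMatrix, Matrix.sub_apply,
      Matrix.diagonal_apply_ne _ (by simp : Sum.inl u ≠ Sum.inr (v, s)),
      SimpleGraph.adjMatrix_apply, Matrix.fromBlocks_apply₁₂, Matrix.of_apply]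
    simp [corona_adj_inl_inr]
  · simp only [Matrix.sub_apply, Matrix.diagonal_apply_ne _ (by simp : Sum.inr (u, r) ≠ Sum.inl v),
      SimpleGraph.lapMatrix, SimpleGraph.degMatrix, Matrix.sub_apply,
      Matrix.diagonal_apply_ne _ (by simp : Sum.inr (u, r) ≠ Sum.inl v),
      SimpleGraph.adjMatrix_apply, Matrix.fromBlocks_apply₂₁, Matrix.of_apply]
    simp [corona_adj_inr_inl]
  · by_cases h : (u, r) = (v, s)
    · rw [h]
      simp only [Matrix.sub_apply, Matrix.diagonal_apply_eq, SimpleGraph.lapMatrix,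
        SimpleGraph.degMatrix, SimpleGraph.adjMatrix_apply, Matrix.fromBlocks_apply₂₂]
      rw [corona_degree_inr]
      simp [corona_adj_inr_inr]
    · simp only [Matrix.sub_apply,
        Matrix.diagonal_apply_ne _ (by simp [h] : Sum.inr (u, r) ≠ Sum.inr (v, s)),
        SimpleGraph.lapMatrix, SimpleGraph.degMatrix,
        SimpleGraph.adjMatrix_apply, Matrix.fromBlocks_apply₂₂, Matrix.diagonal_apply_ne _ h]
      simp [corona_adj_inr_inr]

lemma corona_det {V : Type*} [Fintype V] [DecidableEq V] (H : SimpleGraph V) (k : ℕ) {x : ℝ} (hx : x ≠ 1) :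
    (Matrix.diagonal (fun _ : V ⊕ V × Fin k => x) - (corona H k).lapMatrix ℝ).det
      = (x - 1) ^ (Fintype.card V * k) *
        (Matrix.diagonal (fun _ : V => x - k - k * (x - 1)⁻¹) - H.lapMatrix ℝ).det := by
  classical
  have hx1 : x - 1 ≠ 0 := sub_ne_zero.mpr hx
  rw [corona_block]
  set B := (Matrix.of fun (u : V) (p : V × Fin k) => if u = p.1 then (1:ℝ) else 0) with hB
  set Cm := (Matrix.of fun (p : V × Fin k) (u : V) => if p.1 = u then (1:ℝ) else 0) with hC
  set D := Matrix.diagonal (fun _ : V × Fin k => x - 1) with hD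
  haveI : Invertible D := ⟨Matrix.diagonal (fun _ => (x - 1)⁻¹), by
      rw [hD, Matrix.diagonal_mul_diagonal]
      simp [inv_mul_cancel₀ hx1], by
      rw [hD, Matrix.diagonal_mul_diagonal]
      simp [mul_inv_cancel₀ hx1]⟩
  have hinv : ⅟D = Matrix.diagonal (fun _ : V × Fin k => (x - 1)⁻¹) := by
    apply invOf_eq_right_inv
    rw [hD, Matrix.diagonal_mul_diagonal]
    simp [mul_inv_cancel₀ hx1]
  rw [Matrix.det_fromBlocks₂₂]
  have hdetD : D.det = (x - 1) ^ (Fintype.card V * k) := by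
    rw [hD, Matrix.det_diagonal, Finset.prod_const, Finset.card_univ, Fintype.card_prod,
      Fintype.card_fin]
  have hBC : B * ⅟D * Cm = Matrix.diagonal (fun _ : V => (k : ℝ) * (x - 1)⁻¹) := by
    rw [hinv]
    ext u v
    simp only [Matrix.mul_apply, Matrix.mul_diagonal, Matrix.of_apply, Matrix.diagonal_apply,
      hB, hC]
    rw [Fintype.sum_prod_type]
    simp only [Finset.sum_const, Finset.card_univ, Fintype.card_fin, nsmul_eq_mul,
      ite_mul, one_mul, zero_mul, mul_ite, mul_zero, mul_one]
    by_cases h : u = v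
    · subst h
      simp [mul_comm]
    · simp [h, fun w (h1 : u = w) (h2 : w = v) => h (h1.trans h2)]
  rw [hBC, hdetD]
  congr 2
  rw [sub_right_comm]
  congr 1
  ext i j
  by_cases h : i = j
  · subst h; simp
  · simp [Matrix.diagonal_apply_ne _ h]


lemma my_eval_charpoly {n : Type*} [Fintype n] [DecidableEq n] {R : Type*} [CommRing R]
    (M : Matrix n n R) (x : R) :
    M.charpoly.eval x = (Matrix.diagonal (fun _ => x) - M).det := by
  rw [Matrix.charpoly, ← Polynomial.coe_evalRingHom, RingHom.map_det]
  congr 1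
  ext i j
  by_cases h : i = j
  · subst h; simp [Matrix.charmatrix_apply_eq]
  · simp [Matrix.charmatrix_apply_ne _ _ _ h, Matrix.diagonal_apply_ne _ h]

lemma my_charpoly_herm {n : Type*} [Fintype n] [DecidableEq n] {A : Matrix n n ℝ}
    (hA : A.IsHermitian) : A.charpoly = ∏ i, (X - C (hA.eigenvalues i)) := by
  apply Polynomial.funext
  intro x
  rw [my_eval_charpoly, eval_prod]
  simp only [eval_sub, eval_X, eval_C]
  set U : Matrix n n ℝ := (hA.eigenvectorUnitary : Matrix n n ℝ) with hUdef
  have hU : U * star U = 1 := Matrix.mem_unitaryGroup_iff.mp hA.eigenvectorUnitary.2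
  have key : Matrix.diagonal (fun _ => x) - A
      = U * Matrix.diagonal (fun i => x - hA.eigenvalues i) * star U := by
    have hsp := hA.spectral_theorem
    rw [Unitary.conjStarAlgAut_apply] at hsp
    have h2 : Matrix.diagonal (fun i : n => x - hA.eigenvalues i)
        = Matrix.diagonal (fun _ : n => x) - Matrix.diagonal (RCLike.ofReal ∘ hA.eigenvalues) := by
      rw [Matrix.diagonal_sub]
      congr 1
    rw [h2, Matrix.mul_sub, Matrix.sub_mul, hUdef, ← hsp, ← hUdef]
    congr 1
    have hx : Matrix.diagonal (fun _ : n => x) = x • (1 : Matrix n n ℝ) := by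
      simp [Matrix.smul_one_eq_diagonal]
    rw [hx, mul_smul_comm, mul_one, smul_mul_assoc, hU, smul_one_eq_diagonal]
  have hU' : star U * U = 1 := Matrix.mem_unitaryGroup_iff'.mp hA.eigenvectorUnitary.2
  rw [key, Matrix.det_mul, Matrix.det_mul, mul_comm, ← mul_assoc, ← Matrix.det_mul, hU',
    Matrix.det_one, one_mul, Matrix.det_diagonal]

lemma theta_mul (m : ℕ) (hm : 2 ≤ m) {lam : ℝ} (hlam : 0 ≤ lam) (x : ℝ) :
    (x - thetaMinus m lam) * (x - thetaPlus m lam) = x ^ 2 - (m + lam) * x + lam := by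
  have hm2 : (2 : ℝ) ≤ m := by exact_mod_cast hm
  have hd : (0 : ℝ) ≤ (m + lam) ^ 2 - 4 * lam := by nlinarith
  have hs := Real.sq_sqrt hd
  unfold thetaMinus thetaPlus
  linear_combination (-(1 : ℝ) / 4) * hs


lemma corona_charpoly {N : ℕ} (H : SimpleGraph (Fin N)) (m : ℕ) (hm : 2 ≤ m)
    (hH : (H.lapMatrix ℝ).IsHermitian) :
    ((corona H (m - 1)).lapMatrix ℝ).charpoly
      = (X - C 1) ^ (N * (m - 2)) *
        ∏ i, ((X - C (thetaMinus m (hH.eigenvalues i)))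
            * (X - C (thetaPlus m (hH.eigenvalues i)))) := by
  apply Polynomial.eq_of_infinite_eval_eq
  refine Set.Infinite.mono ?_ ((Set.finite_singleton (1:ℝ)).infinite_compl)
  intro x hx
  have hx : x ≠ 1 := hx
  have hx1 : x - 1 ≠ 0 := sub_ne_zero.mpr hx
  have h1m : 1 ≤ m := by omega
  have hk : ((m - 1 : ℕ) : ℝ) = (m : ℝ) - 1 := by
    rw [Nat.cast_sub h1m, Nat.cast_one]
  simp only [Set.mem_setOf_eq]
  rw [my_eval_charpoly, corona_det H (m - 1) hx, ← my_eval_charpoly, my_charpoly_herm hH]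
  simp only [eval_mul, eval_pow, eval_prod, eval_sub, eval_X, eval_C, Fintype.card_fin]
  have hsplit : N * (m - 1) = N * (m - 2) + N := by
    have h2 : m - 1 = (m - 2) + 1 := by omega
    rw [h2, Nat.mul_succ]
  rw [hsplit, pow_add, mul_assoc]
  congr 1
  have hN : (x - 1) ^ N = ∏ _i : Fin N, (x - 1) := by
    rw [Finset.prod_const, Finset.card_univ, Fintype.card_fin]
  rw [hN, ← Finset.prod_mul_distrib]
  · apply Finset.prod_congr rfl
    intro i _
    have hlam : 0 ≤ hH.eigenvalues i :=
      (SimpleGraph.posSemidef_lapMatrix ℝ H).eigenvalues_nonneg i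
    rw [theta_mul m hm hlam x, hk]
    field_simp
    ring

/-- If `G` is obtained from an `N`-vertex graph `H` by attaching `m-1`
pendant vertices to every vertex of `H`, then the multiset of Laplacian eigenvalues of `G`
is `{1` with multiplicity `N(m-2)}` together with `{θ₋(λᵢ(H)), θ₊(λᵢ(H)) : 1 ≤ i ≤ N}`. -/
theorem stmt2 {N : ℕ} (H : SimpleGraph (Fin N)) (m : ℕ) (hm : 2 ≤ m)
    (hH : (H.lapMatrix ℝ).IsHermitian)
    (hG : ((corona H (m - 1)).lapMatrix ℝ).IsHermitian) :
    Finset.univ.val.map hG.eigenvalues =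
      Multiset.replicate (N * (m - 2)) 1 +
        (Finset.univ.val.map hH.eigenvalues).bind
          (fun lam => {thetaMinus m lam, thetaPlus m lam}) := by
  have hps : ((Finset.univ.val.map hG.eigenvalues).map fun a => X - C a).prod
      = ((corona H (m - 1)).lapMatrix ℝ).charpoly := by
    rw [my_charpoly_herm hG, Multiset.map_map, Finset.prod_eq_multiset_prod]
    rfl
  have hpt : (((Multiset.replicate (N * (m - 2)) (1:ℝ) +
        (Finset.univ.val.map hH.eigenvalues).bind
          (fun lam => {thetaMinus m lam, thetaPlus m lam})).map fun a => X - C a).prod)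
      = ((corona H (m - 1)).lapMatrix ℝ).charpoly := by
    rw [corona_charpoly H m hm hH, Multiset.map_add, Multiset.prod_add,
      Multiset.map_replicate, Multiset.prod_replicate, Multiset.map_bind, Multiset.prod_bind,
      Multiset.map_map, Finset.prod_eq_multiset_prod]
    congr 1
    apply Finset.prod_congr rfl
    intro i _
    simp
  have h := congrArg Polynomial.roots (hps.trans hpt.symm)
  rwa [Polynomial.roots_multiset_prod_X_sub_C, Polynomial.roots_multiset_prod_X_sub_C] at h
end

section
/- Let r ≥ 1 and let w_1, …, w_r be positive real numbers, cyclically ordered, with w_1 + ⋯ + w_r = n and max_{1 ≤ i ≤ r} w_i < n/2. Then there exists a nonempty cyclic interval I ⊆ {1, …, r} such that n/3 ≤ Σ_{i ∈ I} w_i ≤ n/2. -/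
/-- If positive reals `w₁, …, w_r` (read cyclically) sum to `n` and each is
less than `n/2`, then some nonempty cyclic interval of them has sum between `n/3` and `n/2`.
A cyclic interval is given by a starting index `a` and a length `l` with `1 ≤ l ≤ r`, the
indices being taken modulo `r`. -/
theorem stmt5 (r : ℕ) (hr : 0 < r) (w : Fin r → ℝ) (n : ℝ)
    (hpos : ∀ i, 0 < w i) (hsum : ∑ i, w i = n)
    (hmax : ∀ i, w i < n / 2) :
    ∃ a l : ℕ, 1 ≤ l ∧ l ≤ r ∧
      n / 3 ≤ ∑ t ∈ Finset.range l, w ⟨(a + t) % r, Nat.mod_lt _ hr⟩ ∧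
      ∑ t ∈ Finset.range l, w ⟨(a + t) % r, Nat.mod_lt _ hr⟩ ≤ n / 2 := by
  have hn : 0 < n := by
    rw [← hsum]
    exact Finset.sum_pos (fun i _ => hpos i) ⟨⟨0, hr⟩, Finset.mem_univ _⟩
  by_cases hbig : ∃ i, n / 3 ≤ w i
  · obtain ⟨i, hi⟩ := hbig
    refine ⟨i.val, 1, le_refl 1, hr, ?_, ?_⟩ <;>
      simp [Nat.mod_eq_of_lt i.isLt, hi, (hmax i).le]
  push_neg at hbig
  set S : ℕ → ℝ := fun l => ∑ t ∈ Finset.range l, w ⟨(0 + t) % r, Nat.mod_lt _ hr⟩ with hS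
  have hSr : S r = n := by
    rw [← hsum]
    show (∑ t ∈ Finset.range r, w ⟨(0 + t) % r, Nat.mod_lt _ hr⟩) = _
    rw [← Fin.sum_univ_eq_sum_range (fun t => w ⟨(0 + t) % r, Nat.mod_lt _ hr⟩) r]
    exact Finset.sum_congr rfl fun i _ => by
      congr 1
      exact Fin.ext (by simp [Nat.mod_eq_of_lt i.isLt])
  have hsplit : ∀ l, l ≤ r →
      S l + ∑ t ∈ Finset.range (r - l), w ⟨(l + t) % r, Nat.mod_lt _ hr⟩ = n := by
    intro l hl
    rw [← hSr]
    have h := Finset.sum_range_add (fun t => w ⟨(0 + t) % r, Nat.mod_lt _ hr⟩) l (r - l)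
    rw [show l + (r - l) = r from by omega] at h
    show _ = (∑ t ∈ Finset.range r, w ⟨(0 + t) % r, Nat.mod_lt _ hr⟩)
    rw [h]
    simp only [hS, Nat.zero_add]
  have hP : 1 ≤ r ∧ n / 3 ≤ S r := ⟨hr, hSr ▸ by linarith⟩
  classical
  set l := Nat.find (⟨r, hP⟩ : ∃ l, 1 ≤ l ∧ n / 3 ≤ S l) with hl
  obtain ⟨hl1, hl3⟩ := Nat.find_spec (⟨r, hP⟩ : ∃ l, 1 ≤ l ∧ n / 3 ≤ S l)
  have hlr : l ≤ r := Nat.find_le hP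
  have hstep : S l = S (l - 1) + w ⟨(l - 1) % r, Nat.mod_lt _ hr⟩ := by
    have : l = (l - 1) + 1 := by omega
    rw [hS]
    simp only
    conv_lhs => rw [this]
    rw [Finset.sum_range_succ]
    simp
  have hSlt : S l < n / 3 + n / 3 := by
    rcases Nat.lt_or_ge 1 l with h2 | h2
    · have hprev : ¬ (1 ≤ l - 1 ∧ n / 3 ≤ S (l - 1)) := Nat.find_min (⟨r, hP⟩ : ∃ l, 1 ≤ l ∧ n / 3 ≤ S l) (m := l - 1) (by omega)
      have : S (l - 1) < n / 3 := by
        by_contra h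
        exact hprev ⟨by omega, le_of_not_gt h⟩
      rw [hstep]
      have := hbig ⟨(l - 1) % r, Nat.mod_lt _ hr⟩
      linarith
    · have hl1' : l = 1 := by omega
      have : S 1 = w ⟨0 % r, Nat.mod_lt _ hr⟩ := by
        rw [hS]; simp
      have h0 := hbig ⟨0 % r, Nat.mod_lt _ hr⟩
      have hpos0 := hpos ⟨(l-1) % r, Nat.mod_lt _ hr⟩
      rw [hl1', this]
      linarith
  rcases le_or_gt (S l) (n / 2) with hle | hgt
  · exact ⟨0, l, hl1, hlr, hl3, hle⟩
  · -- take the complement interval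
    have hlltr : l < r := by
      rcases Nat.lt_or_ge l r with h | h
      · exact h
      · exfalso
        have : l = r := by omega
        rw [this, hSr] at hSlt
        linarith
    refine ⟨l, r - l, by omega, by omega, ?_, ?_⟩
    · have := hsplit l hlltr.le
      linarith
    · have := hsplit l hlltr.le
      linarith
end

section
/- Let d ≥ 2 and k ≥ 1 be integers, and let G be an n-vertex connected d-regular graph containing two edges u₀u₁ and v₀v₁ with dist_G(u₀u₁, v₀v₁) ≥ 2k + 2. Then (√(d−1) + 1)² · λ₂(G) ≤ (√(d−1) − 1)² · λ_n(G) + 4(d−1)^{3/2}/(k+1). -/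
open Matrix SimpleGraph

attribute [local instance] Classical.propDecidable

/-- Eigenvalues of a real square matrix, sorted in non-decreasing order
(junk value `0` if the matrix is not Hermitian). -/
noncomputable def sortedEigs {n : ℕ} (A : Matrix (Fin n) (Fin n) ℝ) : Fin n → ℝ :=
  if h : A.IsHermitian then h.eigenvalues ∘ Tuple.sort h.eigenvalues else 0

/-- `lapEig G i` is the `i`-th smallest Laplacian eigenvalue of `G` (1-based indexing),
so `lapEig G 2 = λ₂(G)` and `lapEig G n = λₙ(G)`; junk value `0` if `i` is out of range. -/
noncomputable def lapEig {n : ℕ} (G : SimpleGraph (Fin n)) (i : ℕ) : ℝ :=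
  if h : i - 1 < n then sortedEigs (G.lapMatrix ℝ) ⟨i - 1, h⟩ else 0

/-- `adjEig G i` is the `i`-th largest adjacency eigenvalue of `G` (1-based indexing),
so `adjEig G 1 = μ₁(G)` and `adjEig G n = μₙ(G)`; junk value `0` if `i` is out of range. -/
noncomputable def adjEig {n : ℕ} (G : SimpleGraph (Fin n)) (i : ℕ) : ℝ :=
  if h : n - i < n then sortedEigs (G.adjMatrix ℝ) ⟨n - i, h⟩ else 0

section Auxiliary

variable {n : ℕ}

lemma sortedEigs_eq (A : Matrix (Fin n) (Fin n) ℝ) (hA : A.IsHermitian) (j : Fin n) :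
    sortedEigs A j = hA.eigenvalues (Tuple.sort hA.eigenvalues j) := by
  simp only [sortedEigs, dif_pos hA, Function.comp_apply]

lemma sortedEigs_mono (A : Matrix (Fin n) (Fin n) ℝ) (hA : A.IsHermitian) :
    Monotone (sortedEigs A) := by
  intro i j hij
  rw [sortedEigs_eq A hA, sortedEigs_eq A hA]
  exact Tuple.monotone_sort hA.eigenvalues hij

lemma eig_le_sortedMax (A : Matrix (Fin n) (Fin n) ℝ) (hA : A.IsHermitian)
    (h : n - 1 < n) (i : Fin n) : hA.eigenvalues i ≤ sortedEigs A ⟨n-1, h⟩ := by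
  have : hA.eigenvalues i = sortedEigs A ((Tuple.sort hA.eigenvalues).symm i) := by
    rw [sortedEigs_eq A hA, Equiv.apply_symm_apply]
  rw [this]
  refine sortedEigs_mono A hA (Fin.le_def.mpr ?_)
  exact Nat.le_sub_one_of_lt (Fin.is_lt _)

lemma sortedMin_le_eig (A : Matrix (Fin n) (Fin n) ℝ) (hA : A.IsHermitian)
    (h : 0 < n) (i : Fin n) : sortedEigs A ⟨0, h⟩ ≤ hA.eigenvalues i := by
  have : hA.eigenvalues i = sortedEigs A ((Tuple.sort hA.eigenvalues).symm i) := by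
    rw [sortedEigs_eq A hA, Equiv.apply_symm_apply]
  rw [this]
  exact sortedEigs_mono A hA (Fin.le_def.mpr (Nat.zero_le _))

lemma sumdot (f : Fin n → (Fin n → ℝ)) (y : Fin n → ℝ) :
    (∑ i, f i) ⬝ᵥ y = ∑ i, f i ⬝ᵥ y := by
  simp only [dotProduct, Finset.sum_apply, Finset.sum_mul]
  rw [Finset.sum_comm]

lemma eigBasis_dot (A : Matrix (Fin n) (Fin n) ℝ) (hA : A.IsHermitian) (i j : Fin n) :
    ⇑(hA.eigenvectorBasis i) ⬝ᵥ ⇑(hA.eigenvectorBasis j) = if i = j then 1 else 0 := by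
  have h := (orthonormal_iff_ite.mp hA.eigenvectorBasis.orthonormal) i j
  simpa [PiLp.inner_apply, RCLike.inner_apply, dotProduct, mul_comm] using h

lemma decomp (A : Matrix (Fin n) (Fin n) ℝ) (hA : A.IsHermitian) (x : Fin n → ℝ) :
    x ⬝ᵥ x = ∑ i, (⇑(hA.eigenvectorBasis i) ⬝ᵥ x)^2 ∧
    x ⬝ᵥ (A *ᵥ x) = ∑ i, hA.eigenvalues i * (⇑(hA.eigenvectorBasis i) ⬝ᵥ x)^2 := by
  set B := hA.eigenvectorBasis with hB
  set c : Fin n → ℝ := fun i => ⇑(B i) ⬝ᵥ x with hc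
  have hx : x = ∑ i, c i • ⇑(B i) := by
    have h := B.sum_repr' (WithLp.toLp 2 x)
    have h2 : ∀ i, (inner ℝ (B i) (WithLp.toLp 2 x) : ℝ) = c i := by
      intro i
      simp [PiLp.inner_apply, RCLike.inner_apply, dotProduct, hc, mul_comm]
    simp_rw [h2] at h
    have h3 := congrArg WithLp.ofLp h
    simp only [WithLp.ofLp_sum, WithLp.ofLp_smul] at h3
    exact h3.symm
  have key : ∀ y : Fin n → ℝ, x ⬝ᵥ y = ∑ i, c i * (⇑(B i) ⬝ᵥ y) := by
    intro y
    nth_rw 1 [hx]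
    rw [sumdot]
    exact Finset.sum_congr rfl fun i _ => smul_dotProduct _ _ _
  constructor
  · rw [key x]
    refine Finset.sum_congr rfl fun i _ => ?_
    rw [pow_two, hc]
  · have hAx : A *ᵥ x = ∑ i, (c i * hA.eigenvalues i) • ⇑(B i) := by
      nth_rw 1 [hx]
      rw [← Matrix.mulVecLin_apply, map_sum]
      refine Finset.sum_congr rfl fun i _ => ?_
      simp [Matrix.mulVecLin_apply, Matrix.mulVec_smul, hB, hA.mulVec_eigenvectorBasis, smul_smul,
        mul_comm]
    rw [hAx]
    have dotsum : ∀ (y : Fin n → ℝ) (f : Fin n → (Fin n → ℝ)),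
        y ⬝ᵥ (∑ i, f i) = ∑ i, y ⬝ᵥ f i := by
      intro y f
      simp only [dotProduct, Finset.sum_apply, Finset.mul_sum]
      rw [Finset.sum_comm]
    rw [dotsum]
    refine Finset.sum_congr rfl fun i _ => ?_
    rw [dotProduct_smul, key ⇑(B i)]
    rw [Finset.sum_eq_single i]
    · have : ⇑(B i) ⬝ᵥ ⇑(B i) = 1 := by rw [eigBasis_dot A hA i i, if_pos rfl]
      rw [this, smul_eq_mul]; ring
    · intro j _ hj
      rw [eigBasis_dot A hA j i, if_neg hj, mul_zero]
    · intro h; exact absurd (Finset.mem_univ i) h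

lemma quad_le_max (A : Matrix (Fin n) (Fin n) ℝ) (hA : A.IsHermitian)
    (h : n - 1 < n) (x : Fin n → ℝ) :
    x ⬝ᵥ (A *ᵥ x) ≤ sortedEigs A ⟨n-1, h⟩ * (x ⬝ᵥ x) := by
  obtain ⟨h1, h2⟩ := decomp A hA x
  rw [h1, h2, Finset.mul_sum]
  refine Finset.sum_le_sum fun i _ => ?_
  exact mul_le_mul_of_nonneg_right (eig_le_sortedMax A hA h i) (sq_nonneg _)

lemma lap_lambda2 (G : SimpleGraph (Fin n)) (hconn : G.Connected) (h1 : 1 < n)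
    (x : Fin n → ℝ) (hsum : ∑ i, x i = 0) :
    sortedEigs (G.lapMatrix ℝ) ⟨1, h1⟩ * (x ⬝ᵥ x) ≤ x ⬝ᵥ (G.lapMatrix ℝ *ᵥ x) := by
  have h0 : 0 < n := by omega
  set L := G.lapMatrix ℝ with hL
  have hA : L.IsHermitian := (posSemidef_lapMatrix ℝ G).1
  set σ := Tuple.sort hA.eigenvalues with hσ
  -- the smallest sorted eigenvalue is 0
  have hmin : sortedEigs L ⟨0, h0⟩ = 0 := by
    have hdet : L.det = 0 := by
      rw [← Matrix.exists_mulVec_eq_zero_iff]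
      refine ⟨fun _ => 1, ?_, G.lapMatrix_mulVec_const_eq_zero⟩
      intro hcon
      have := congrFun hcon ⟨0, h0⟩
      simp at this
    have hprod : ∏ i, hA.eigenvalues i = 0 := by
      have := hA.det_eq_prod_eigenvalues
      rw [hdet] at this
      exact_mod_cast this.symm
    obtain ⟨i, _, hi⟩ := Finset.prod_eq_zero_iff.mp hprod
    refine le_antisymm ?_ ?_
    · calc sortedEigs L ⟨0, h0⟩ ≤ hA.eigenvalues i := sortedMin_le_eig L hA h0 i
        _ = 0 := hi
    · rw [sortedEigs_eq L hA]
      exact (posSemidef_lapMatrix ℝ G).eigenvalues_nonneg _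
  -- the eigenvector for index σ 0 is constant
  set v : Fin n → ℝ := ⇑(hA.eigenvectorBasis (σ ⟨0, h0⟩)) with hv
  have hLv : L *ᵥ v = 0 := by
    rw [hv, hA.mulVec_eigenvectorBasis]
    have : hA.eigenvalues (σ ⟨0, h0⟩) = 0 := by rw [← sortedEigs_eq L hA]; exact hmin
    rw [this, zero_smul]
  have hvconst : ∀ w : Fin n, v w = v ⟨0, h0⟩ := by
    have := (G.lapMatrix_mulVec_eq_zero_iff_forall_reachable (x := v)).mp
      (by exact hLv)
    intro w
    exact this w ⟨0, h0⟩ (hconn.preconnected w ⟨0, h0⟩)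
  have hvx : v ⬝ᵥ x = 0 := by
    calc v ⬝ᵥ x = ∑ i, v ⟨0, h0⟩ * x i := by
          refine Finset.sum_congr rfl fun i _ => ?_
          rw [hvconst i]
      _ = v ⟨0, h0⟩ * ∑ i, x i := by rw [Finset.mul_sum]
      _ = 0 := by rw [hsum, mul_zero]
  obtain ⟨hd1, hd2⟩ := decomp L hA x
  rw [hd1, hd2, Finset.mul_sum]
  rw [← Equiv.sum_comp σ (fun i => hA.eigenvalues i * (⇑(hA.eigenvectorBasis i) ⬝ᵥ x)^2)]
  rw [← Equiv.sum_comp σ (fun i => sortedEigs L ⟨1, h1⟩ * (⇑(hA.eigenvectorBasis i) ⬝ᵥ x)^2)]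
  refine Finset.sum_le_sum fun j _ => ?_
  by_cases hj : j = ⟨0, h0⟩
  · subst hj
    rw [← hv, hvx]
    simp
  · have : sortedEigs L ⟨1, h1⟩ ≤ hA.eigenvalues (σ j) := by
      rw [sortedEigs_eq L hA]
      refine Tuple.monotone_sort hA.eigenvalues (Fin.le_def.mpr ?_)
      have : (j : ℕ) ≠ 0 := fun hc => hj (Fin.ext hc)
      exact Nat.one_le_iff_ne_zero.mpr this
    exact mul_le_mul_of_nonneg_right this (sq_nonneg _)

section GraphSide
variable (G : SimpleGraph (Fin n)) (u₀ u₁ : Fin n)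

/-- distance to the nearer endpoint of the edge -/
noncomputable def rad (w : Fin n) : ℕ := min (G.dist u₀ w) (G.dist u₁ w)

noncomputable def shell (j : ℕ) : Finset (Fin n) :=
  Finset.univ.filter (fun w => rad G u₀ u₁ w = j)

lemma mem_shell (j : ℕ) (w : Fin n) : w ∈ shell G u₀ u₁ j ↔ rad G u₀ u₁ w = j := by
  simp [shell]

variable {G u₀ u₁}

lemma exists_adj_dist_pred (hconn : G.Connected) (u w : Fin n) (h : 1 ≤ G.dist u w) :
    ∃ w', G.Adj w w' ∧ G.dist u w' + 1 = G.dist u w := by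
  obtain ⟨p, hp⟩ := (hconn.preconnected w u).exists_walk_length_eq_dist
  cases p with
  | nil =>
    rw [SimpleGraph.Walk.length_nil, dist_comm] at hp
    omega
  | @cons _ w' _ hadj q =>
    refine ⟨w', hadj, ?_⟩
    have h1 : G.dist u w' ≤ q.length := by
      rw [dist_comm]; exact SimpleGraph.dist_le q
    have h2 : q.length + 1 = G.dist u w := by
      rw [dist_comm]; simpa using hp
    have h3 : G.dist u w ≤ G.dist u w' + 1 := by
      have := hconn.dist_triangle (u := u) (v := w') (w := w)
      have hd1 : G.dist w' w = 1 := by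
        rw [dist_comm]; exact (G.dist_eq_one_iff_adj).mpr hadj
      omega
    omega

lemma rad_adj_le (hconn : G.Connected) {w w' : Fin n} (hadj : G.Adj w w') :
    rad G u₀ u₁ w' ≤ rad G u₀ u₁ w + 1 := by
  have h1 : G.dist u₀ w' ≤ G.dist u₀ w + 1 := by
    have := hconn.dist_triangle (u := u₀) (v := w) (w := w')
    have : G.dist w w' = 1 := (G.dist_eq_one_iff_adj).mpr hadj
    have := hconn.dist_triangle (u := u₀) (v := w) (w := w')
    omega
  have h2 : G.dist u₁ w' ≤ G.dist u₁ w + 1 := by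
    have : G.dist w w' = 1 := (G.dist_eq_one_iff_adj).mpr hadj
    have := hconn.dist_triangle (u := u₁) (v := w) (w := w')
    omega
  rw [rad, rad]
  omega

lemma rad_pred (hconn : G.Connected) (he : G.Adj u₀ u₁) {w : Fin n}
    (h : 1 ≤ rad G u₀ u₁ w) :
    ∃ w', G.Adj w w' ∧ rad G u₀ u₁ w' + 1 = rad G u₀ u₁ w := by
  rw [rad] at h
  rcases le_or_gt (G.dist u₀ w) (G.dist u₁ w) with hle | hlt
  · obtain ⟨w', hadj, hw'⟩ := exists_adj_dist_pred hconn u₀ w (by omega)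
    refine ⟨w', hadj, ?_⟩
    have hup : rad G u₀ u₁ w' ≤ G.dist u₀ w' := min_le_left _ _
    have hlow : rad G u₀ u₁ w ≤ rad G u₀ u₁ w' + 1 := rad_adj_le hconn hadj.symm
    have hmin : rad G u₀ u₁ w = G.dist u₀ w := by rw [rad]; omega
    omega
  · obtain ⟨w', hadj, hw'⟩ := exists_adj_dist_pred hconn u₁ w (by omega)
    refine ⟨w', hadj, ?_⟩
    have hup : rad G u₀ u₁ w' ≤ G.dist u₁ w' := min_le_right _ _
    have hlow : rad G u₀ u₁ w ≤ rad G u₀ u₁ w' + 1 := rad_adj_le hconn hadj.symm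
    have hmin : rad G u₀ u₁ w = G.dist u₁ w := by rw [rad]; omega
    omega

lemma rad_self₀ : rad G u₀ u₁ u₀ = 0 := by
  rw [rad]
  simp [SimpleGraph.dist_self]

lemma rad_self₁ : rad G u₀ u₁ u₁ = 0 := by
  rw [rad]
  simp [SimpleGraph.dist_self]

lemma rad_eq_zero (hconn : G.Connected) {w : Fin n} (h : rad G u₀ u₁ w = 0) :
    w = u₀ ∨ w = u₁ := by
  rw [rad] at h
  rcases Nat.min_eq_zero_iff.mp h with h0 | h0
  · left; exact (hconn.dist_eq_zero_iff.mp h0).symm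
  · right; exact (hconn.dist_eq_zero_iff.mp h0).symm

/-- every vertex has a neighbour which is not strictly deeper -/
lemma rad_escape (hconn : G.Connected) (he : G.Adj u₀ u₁) (w : Fin n) :
    ∃ w', G.Adj w w' ∧ rad G u₀ u₁ w' ≠ rad G u₀ u₁ w + 1 := by
  rcases Nat.eq_zero_or_pos (rad G u₀ u₁ w) with h0 | hpos
  · rcases rad_eq_zero hconn h0 with rfl | rfl
    · exact ⟨u₁, he, by rw [h0, rad_self₁]; omega⟩
    · exact ⟨u₀, he.symm, by rw [h0, rad_self₀]; omega⟩
  · obtain ⟨w', hadj, hw'⟩ := rad_pred hconn he hpos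
    exact ⟨w', hadj, by omega⟩

lemma shell_succ_card {d : ℕ} (hconn : G.Connected) (hreg : G.IsRegularOfDegree d)
    (he : G.Adj u₀ u₁) (j : ℕ) :
    (shell G u₀ u₁ (j+1)).card ≤ (d-1) * (shell G u₀ u₁ j).card := by
  choose c hc1 hc2 using rad_escape hconn he
  have hsub : shell G u₀ u₁ (j+1) ⊆ (shell G u₀ u₁ j).biUnion
      (fun w => G.neighborFinset w \ {c w}) := by
    intro w' hw'
    rw [mem_shell] at hw'
    obtain ⟨w, hadj, hweq⟩ := rad_pred hconn he (w := w') (by omega)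
    refine Finset.mem_biUnion.mpr ⟨w, ?_, ?_⟩
    · rw [mem_shell]; omega
    · rw [Finset.mem_sdiff, SimpleGraph.mem_neighborFinset]
      refine ⟨hadj.symm, ?_⟩
      intro hmem
      rw [Finset.mem_singleton] at hmem
      apply hc2 w
      rw [← hmem, hw']
      omega
  calc (shell G u₀ u₁ (j+1)).card ≤ _ := Finset.card_le_card hsub
    _ ≤ ∑ w ∈ shell G u₀ u₁ j, (G.neighborFinset w \ {c w}).card :=
        Finset.card_biUnion_le
    _ ≤ ∑ _w ∈ shell G u₀ u₁ j, (d-1) := by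
        refine Finset.sum_le_sum fun w _ => ?_
        have hcard : (G.neighborFinset w).card = d := by
          rw [SimpleGraph.card_neighborFinset_eq_degree]; exact hreg w
        have hsub2 : {c w} ⊆ G.neighborFinset w := by
          rw [Finset.singleton_subset_iff, SimpleGraph.mem_neighborFinset]
          exact hc1 w
        rw [Finset.card_sdiff_of_subset hsub2, hcard, Finset.card_singleton]
    _ = (d-1) * (shell G u₀ u₁ j).card := by
        rw [Finset.sum_const, smul_eq_mul, mul_comm]

lemma shell_card_le {d : ℕ} (hconn : G.Connected) (hreg : G.IsRegularOfDegree d)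
    (he : G.Adj u₀ u₁) (j m : ℕ) :
    (shell G u₀ u₁ (j+m)).card ≤ (d-1)^m * (shell G u₀ u₁ j).card := by
  induction m with
  | zero => simp
  | succ m ih =>
    calc (shell G u₀ u₁ (j+(m+1))).card = (shell G u₀ u₁ ((j+m)+1)).card := by ring_nf
      _ ≤ (d-1) * (shell G u₀ u₁ (j+m)).card := shell_succ_card hconn hreg he _
      _ ≤ (d-1) * ((d-1)^m * (shell G u₀ u₁ j).card) := by
          exact Nat.mul_le_mul_left _ ih
      _ = (d-1)^(m+1) * (shell G u₀ u₁ j).card := by ring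

/-- at most `d-1` neighbours in the next shell -/
lemma boundary_card {d : ℕ} (hconn : G.Connected) (hreg : G.IsRegularOfDegree d)
    (he : G.Adj u₀ u₁) {w : Fin n} {j : ℕ} (hw : rad G u₀ u₁ w = j) :
    (Finset.univ.filter (fun w' => G.Adj w w' ∧ rad G u₀ u₁ w' = j+1)).card ≤ d - 1 := by
  choose c hc1 hc2 using rad_escape hconn he
  have hsub : Finset.univ.filter (fun w' => G.Adj w w' ∧ rad G u₀ u₁ w' = j+1)
      ⊆ G.neighborFinset w \ {c w} := by
    intro w' hw'
    rw [Finset.mem_filter] at hw'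
    rw [Finset.mem_sdiff, SimpleGraph.mem_neighborFinset, Finset.mem_singleton]
    refine ⟨hw'.2.1, ?_⟩
    intro hmem
    apply hc2 w
    rw [← hmem, hw'.2.2, hw]
  calc _ ≤ (G.neighborFinset w \ {c w}).card := Finset.card_le_card hsub
    _ ≤ d - 1 := by
      have hcard : (G.neighborFinset w).card = d := by
        rw [SimpleGraph.card_neighborFinset_eq_degree]; exact hreg w
      have hsub2 : {c w} ⊆ G.neighborFinset w := by
        rw [Finset.singleton_subset_iff, SimpleGraph.mem_neighborFinset]
        exact hc1 w
      rw [Finset.card_sdiff_of_subset hsub2, hcard, Finset.card_singleton]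

end GraphSide

/-- value of the radial test function at depth `a` -/
noncomputable def tv (k : ℕ) (r : ℝ) (a : ℕ) : ℝ := if a ≤ k then r ^ a else 0

/-- signed value -/
noncomputable def tvh (k : ℕ) (r : ℝ) (a : ℕ) : ℝ := (-1) ^ a * tv k r a

lemma neg_one_pow_sq (a : ℕ) : ((-1:ℝ)^a)^2 = 1 := by
  rw [← pow_mul, mul_comm, pow_mul, neg_one_sq, one_pow]

lemma pair_ineq_aux (k a b : ℕ) (s r : ℝ) (hs : 1 ≤ s) (hr0 : 0 < r) (hrs : r * s = 1)
    (hab : b = a ∨ b = a + 1) :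
    (s+1)^2 * (tv k r a - tv k r b)^2 ≤ (s-1)^2 * (tvh k r a - tvh k r b)^2
      + (if a = k ∧ b = k+1 then 4*s*(r^k)^2 else 0) := by
  have hs0 : 0 < s := by linarith
  have herr : (0:ℝ) ≤ (if a = k ∧ b = k+1 then 4*s*(r^k)^2 else 0) := by
    split
    · positivity
    · exact le_refl 0
  rcases hab with rfl | rfl
  · simp only [sub_self]
    calc (s+1)^2 * 0^2 = 0 := by ring
      _ ≤ _ := by positivity
  · by_cases hak : a ≤ k
    · by_cases hak1 : a + 1 ≤ k
      · -- interior crossing edge: exact equality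
        have hcond : ¬(a = k ∧ a+1 = k+1) := by omega
        rw [if_neg hcond, add_zero]
        have h1 : tv k r a = r^a := if_pos hak
        have h2 : tv k r (a+1) = r^(a+1) := if_pos hak1
        have hsign : (-1:ℝ)^(a+1) = -((-1)^a) := by rw [pow_succ]; ring
        have key : (s+1) * (r^a - r^(a+1)) = (s-1) * (r^a + r^(a+1)) := by
          have hp : r^(a+1) = r^a * r := pow_succ r a
          rw [hp]
          linear_combination (-2 * r^a) * hrs
        have hhat : (tvh k r a - tvh k r (a+1))^2 = (r^a + r^(a+1))^2 := by
          rw [tvh, tvh, h1, h2]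
          calc ((-1:ℝ)^a * r^a - (-1)^(a+1) * r^(a+1))^2
              = ((-1:ℝ)^a)^2 * (r^a + r^(a+1))^2 := by rw [hsign]; ring
            _ = (r^a + r^(a+1))^2 := by rw [neg_one_pow_sq, one_mul]
        rw [h1, h2, hhat]
        calc (s+1)^2 * (r^a - r^(a+1))^2 = ((s+1) * (r^a - r^(a+1)))^2 := by ring
          _ = ((s-1) * (r^a + r^(a+1)))^2 := by rw [key]
          _ ≤ (s-1)^2 * (r^a + r^(a+1))^2 := le_of_eq (by ring)
      · -- boundary edge: a = k
        have hak' : a = k := by omega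
        rw [if_pos ⟨hak', by omega⟩]
        have h1 : tv k r a = r^a := if_pos hak
        have h2 : tv k r (a+1) = 0 := if_neg (by omega)
        have hhat : (tvh k r a - tvh k r (a+1))^2 = (r^a)^2 := by
          rw [tvh, tvh, h1, h2]
          calc ((-1:ℝ)^a * r^a - (-1)^(a+1) * 0)^2 = ((-1:ℝ)^a)^2 * (r^a)^2 := by ring
            _ = (r^a)^2 := by rw [neg_one_pow_sq, one_mul]
        rw [h1, h2, hhat, ← hak']
        exact le_of_eq (by ring)
    · -- beyond the ball
      have h1 : tv k r a = 0 := if_neg hak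
      have h2 : tv k r (a+1) = 0 := if_neg (by omega)
      have hh : tvh k r a - tvh k r (a+1) = 0 := by rw [tvh, tvh, h1, h2]; ring
      rw [h1, h2, hh]
      calc (s+1)^2 * ((0:ℝ)-0)^2 = 0 := by ring
        _ ≤ _ := by positivity

lemma ite_err_nonneg (c : Prop) [Decidable c] (t : ℝ) (ht : 0 ≤ t) :
    (0:ℝ) ≤ if c then t else 0 := by
  split
  · exact ht
  · exact le_refl 0

lemma pair_ineq (k a b : ℕ) (s r : ℝ) (hs : 1 ≤ s) (hr0 : 0 < r) (hrs : r * s = 1)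
    (hab : b = a ∨ b = a + 1 ∨ a = b + 1) :
    (s+1)^2 * (tv k r a - tv k r b)^2 ≤ (s-1)^2 * (tvh k r a - tvh k r b)^2
      + (if a = k ∧ b = k+1 then 4*s*(r^k)^2 else 0)
      + (if b = k ∧ a = k+1 then 4*s*(r^k)^2 else 0) := by
  have hs0 : 0 < s := by linarith
  have ht : (0:ℝ) ≤ 4*s*(r^k)^2 := by positivity
  rcases hab with h | h | h
  · rw [h]
    simp only [sub_self]
    have e1 := ite_err_nonneg (a = k ∧ a = k+1) _ ht
    have e2 := ite_err_nonneg (a = k ∧ a = k+1) _ ht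
    nlinarith
  · rw [h]
    have h1 := pair_ineq_aux k a (a+1) s r hs hr0 hrs (Or.inr rfl)
    have e2 := ite_err_nonneg (a+1 = k ∧ a = k+1) _ ht
    linarith
  · rw [h]
    have h1 := pair_ineq_aux k b (b+1) s r hs hr0 hrs (Or.inr rfl)
    have e1 := ite_err_nonneg (b+1 = k ∧ b = k+1) _ ht
    have hsq1 : (tv k r (b+1) - tv k r b)^2 = (tv k r b - tv k r (b+1))^2 := by ring
    have hsq2 : (tvh k r (b+1) - tvh k r b)^2 = (tvh k r b - tvh k r (b+1))^2 := by ring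
    rw [hsq1, hsq2]
    linarith

section OneEdge
variable {n : ℕ} {G : SimpleGraph (Fin n)} {u₀ u₁ : Fin n}

noncomputable def testF (G : SimpleGraph (Fin n)) (u₀ u₁ : Fin n) (k : ℕ) (r : ℝ)
    (w : Fin n) : ℝ := tv k r (rad G u₀ u₁ w)

noncomputable def testFh (G : SimpleGraph (Fin n)) (u₀ u₁ : Fin n) (k : ℕ) (r : ℝ)
    (w : Fin n) : ℝ := tvh k r (rad G u₀ u₁ w)

lemma norm_lower {d k : ℕ} (hconn : G.Connected) (hreg : G.IsRegularOfDegree d)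
    (hd : 2 ≤ d) (he : G.Adj u₀ u₁) {s r : ℝ} (hs : 1 ≤ s) (hr0 : 0 < r)
    (hrs : r * s = 1) (hs2 : s^2 = (d:ℝ) - 1) :
    ((k:ℝ)+1) * (((shell G u₀ u₁ k).card : ℝ) * (r^k)^2)
      ≤ ∑ w, (testF G u₀ u₁ k r w)^2 := by
  have hdr : ((d:ℝ)-1) * r^2 = 1 := by
    rw [← hs2]
    calc s^2 * r^2 = (r*s)^2 := by ring
      _ = 1 := by rw [hrs]; norm_num
  have hsub : (Finset.range (k+1)).biUnion (shell G u₀ u₁) ⊆ Finset.univ :=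
    Finset.subset_univ _
  have hdisj : ∀ i ∈ Finset.range (k+1), ∀ j ∈ Finset.range (k+1), i ≠ j →
      Disjoint (shell G u₀ u₁ i) (shell G u₀ u₁ j) := by
    intro i _ j _ hij
    rw [Finset.disjoint_left]
    intro w hwi hwj
    rw [mem_shell] at hwi hwj
    omega
  have step1 : ∑ i ∈ Finset.range (k+1), ∑ w ∈ shell G u₀ u₁ i, (testF G u₀ u₁ k r w)^2
      ≤ ∑ w, (testF G u₀ u₁ k r w)^2 := by
    rw [← Finset.sum_biUnion hdisj]
    refine Finset.sum_le_sum_of_subset_of_nonneg hsub fun w _ _ => sq_nonneg _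
  refine le_trans ?_ step1
  have step2 : ∀ i ∈ Finset.range (k+1),
      ∑ w ∈ shell G u₀ u₁ i, (testF G u₀ u₁ k r w)^2
        = ((shell G u₀ u₁ i).card : ℝ) * (r^i)^2 := by
    intro i hi
    rw [Finset.mem_range] at hi
    have : ∀ w ∈ shell G u₀ u₁ i, (testF G u₀ u₁ k r w)^2 = (r^i)^2 := by
      intro w hw
      rw [mem_shell] at hw
      rw [testF, hw, tv, if_pos (by omega)]
    rw [Finset.sum_congr rfl this, Finset.sum_const, nsmul_eq_mul]
  have step3 : ∀ i ∈ Finset.range (k+1),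
      ((shell G u₀ u₁ k).card : ℝ) * (r^k)^2
        ≤ ((shell G u₀ u₁ i).card : ℝ) * (r^i)^2 := by
    intro i hi
    rw [Finset.mem_range] at hi
    set m := k - i with hm
    have hkim : k = i + m := by omega
    have hcard : ((shell G u₀ u₁ k).card : ℝ)
        ≤ ((d-1:ℕ):ℝ)^m * ((shell G u₀ u₁ i).card : ℝ) := by
      have := shell_card_le hconn hreg he i m
      rw [← hkim] at this
      exact_mod_cast this
    have hdcast : ((d-1:ℕ):ℝ) = (d:ℝ) - 1 := by
      rw [Nat.cast_sub (by omega), Nat.cast_one]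
    have hpow : ((d:ℝ)-1)^m * (r^m)^2 = 1 := by
      calc ((d:ℝ)-1)^m * (r^m)^2 = (((d:ℝ)-1) * r^2)^m := by
            rw [← pow_mul, mul_comm m 2, pow_mul, ← mul_pow]
        _ = 1 := by rw [hdr, one_pow]
    calc ((shell G u₀ u₁ k).card : ℝ) * (r^k)^2
        ≤ (((d:ℝ)-1)^m * ((shell G u₀ u₁ i).card : ℝ)) * (r^k)^2 := by
          refine mul_le_mul_of_nonneg_right ?_ (sq_nonneg _)
          rw [← hdcast]; exact hcard
      _ = ((shell G u₀ u₁ i).card : ℝ) * (r^i)^2 * (((d:ℝ)-1)^m * (r^m)^2) := by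
          rw [hkim, pow_add]; ring
      _ = ((shell G u₀ u₁ i).card : ℝ) * (r^i)^2 := by rw [hpow, mul_one]
  calc ((k:ℝ)+1) * (((shell G u₀ u₁ k).card : ℝ) * (r^k)^2)
      = ∑ _i ∈ Finset.range (k+1), ((shell G u₀ u₁ k).card : ℝ) * (r^k)^2 := by
        rw [Finset.sum_const, Finset.card_range, nsmul_eq_mul]
        push_cast
        ring
    _ ≤ ∑ i ∈ Finset.range (k+1), ((shell G u₀ u₁ i).card : ℝ) * (r^i)^2 :=
        Finset.sum_le_sum step3
    _ = ∑ i ∈ Finset.range (k+1), ∑ w ∈ shell G u₀ u₁ i, (testF G u₀ u₁ k r w)^2 :=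
        (Finset.sum_congr rfl step2).symm

lemma oneEdge_quad {d k : ℕ} (hconn : G.Connected) (hreg : G.IsRegularOfDegree d)
    (hd : 2 ≤ d) (he : G.Adj u₀ u₁) {s r : ℝ} (hs : 1 ≤ s) (hr0 : 0 < r)
    (hrs : r * s = 1) (hs2 : s^2 = (d:ℝ) - 1) :
    (s+1)^2 * (∑ w, ∑ w', if G.Adj w w'
        then (testF G u₀ u₁ k r w - testF G u₀ u₁ k r w')^2 else 0)
      ≤ (s-1)^2 * (∑ w, ∑ w', if G.Adj w w'
          then (testFh G u₀ u₁ k r w - testFh G u₀ u₁ k r w')^2 else 0)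
        + 8 * s^3 / ((k:ℝ)+1) * (∑ w, (testF G u₀ u₁ k r w)^2) := by
  have hs0 : 0 < s := by linarith
  set ρ : Fin n → ℕ := rad G u₀ u₁ with hρ
  set c : ℝ := 4*s*(r^k)^2 with hc
  have hc0 : 0 ≤ c := by positivity
  set err : Fin n → Fin n → ℝ :=
    fun w w' => if ρ w = k ∧ ρ w' = k+1 then c else 0 with herr
  set E1 : ℝ := ∑ w, ∑ w', if G.Adj w w' then err w w' else 0 with hE1
  -- Step A: pointwise pair inequality summed
  have stepA : (s+1)^2 * (∑ w, ∑ w', if G.Adj w w'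
        then (testF G u₀ u₁ k r w - testF G u₀ u₁ k r w')^2 else 0)
      ≤ (s-1)^2 * (∑ w, ∑ w', if G.Adj w w'
          then (testFh G u₀ u₁ k r w - testFh G u₀ u₁ k r w')^2 else 0) + 2 * E1 := by
    have hswap : (∑ w, ∑ w', if G.Adj w w' then err w' w else 0) = E1 := by
      rw [hE1, Finset.sum_comm]
      refine Finset.sum_congr rfl fun w _ => Finset.sum_congr rfl fun w' _ => ?_
      exact if_congr (G.adj_comm w' w) rfl rfl
    have hmain : ∑ w, ∑ w', (if G.Adj w w'
          then (s+1)^2 * (testF G u₀ u₁ k r w - testF G u₀ u₁ k r w')^2 else 0)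
        ≤ ∑ w, ∑ w', (if G.Adj w w'
            then ((s-1)^2 * (testFh G u₀ u₁ k r w - testFh G u₀ u₁ k r w')^2
              + err w w' + err w' w) else 0) := by
      refine Finset.sum_le_sum fun w _ => Finset.sum_le_sum fun w' _ => ?_
      by_cases hadj : G.Adj w w'
      · rw [if_pos hadj, if_pos hadj]
        have h1 : ρ w' ≤ ρ w + 1 := rad_adj_le hconn hadj
        have h2 : ρ w ≤ ρ w' + 1 := rad_adj_le hconn hadj.symm
        have hnbr : ρ w' = ρ w ∨ ρ w' = ρ w + 1 ∨ ρ w = ρ w' + 1 := by omega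
        exact pair_ineq k (ρ w) (ρ w') s r hs hr0 hrs hnbr
      · rw [if_neg hadj, if_neg hadj]
    have hL : (s+1)^2 * (∑ w, ∑ w', if G.Adj w w'
          then (testF G u₀ u₁ k r w - testF G u₀ u₁ k r w')^2 else 0)
        = ∑ w, ∑ w', (if G.Adj w w'
            then (s+1)^2 * (testF G u₀ u₁ k r w - testF G u₀ u₁ k r w')^2 else 0) := by
      rw [Finset.mul_sum]
      refine Finset.sum_congr rfl fun w _ => ?_
      rw [Finset.mul_sum]
      refine Finset.sum_congr rfl fun w' _ => ?_
      rw [mul_ite, mul_zero]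
    have hR : ∑ w, ∑ w', (if G.Adj w w'
          then ((s-1)^2 * (testFh G u₀ u₁ k r w - testFh G u₀ u₁ k r w')^2
            + err w w' + err w' w) else 0)
        = (s-1)^2 * (∑ w, ∑ w', if G.Adj w w'
            then (testFh G u₀ u₁ k r w - testFh G u₀ u₁ k r w')^2 else 0)
          + (∑ w, ∑ w', if G.Adj w w' then err w w' else 0)
          + (∑ w, ∑ w', if G.Adj w w' then err w' w else 0) := by
      rw [Finset.mul_sum, ← Finset.sum_add_distrib, ← Finset.sum_add_distrib]
      refine Finset.sum_congr rfl fun w _ => ?_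
      rw [Finset.mul_sum, ← Finset.sum_add_distrib, ← Finset.sum_add_distrib]
      refine Finset.sum_congr rfl fun w' _ => ?_
      by_cases hadj : G.Adj w w'
      · rw [if_pos hadj, if_pos hadj, if_pos hadj, if_pos hadj]
      · rw [if_neg hadj, if_neg hadj, if_neg hadj, if_neg hadj]
        ring
    rw [hR, hswap] at hmain
    rw [hL]
    linarith [hmain]
  -- Step B: bound E1
  have stepB : E1 ≤ ((shell G u₀ u₁ k).card : ℝ) * (((d:ℝ)-1) * c) := by
    have hinner : ∀ w : Fin n, (∑ w', if G.Adj w w' then err w w' else 0)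
        ≤ if ρ w = k then ((d:ℝ)-1) * c else 0 := by
      intro w
      by_cases hwk : ρ w = k
      · rw [if_pos hwk]
        have heq : ∀ w', (if G.Adj w w' then err w w' else 0)
            = if (G.Adj w w' ∧ ρ w' = k+1) then c else 0 := by
          intro w'
          by_cases hadj : G.Adj w w'
          · rw [if_pos hadj]
            show (if ρ w = k ∧ ρ w' = k+1 then c else 0) = _
            by_cases hk1 : ρ w' = k+1
            · rw [if_pos ⟨hwk, hk1⟩, if_pos ⟨hadj, hk1⟩]
            · rw [if_neg (fun hco => hk1 hco.2), if_neg (fun hco => hk1 hco.2)]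
          · rw [if_neg hadj, if_neg (fun hco => hadj hco.1)]
        rw [Finset.sum_congr rfl (fun w' _ => heq w')]
        rw [Finset.sum_ite, Finset.sum_const, Finset.sum_const_zero, add_zero,
          nsmul_eq_mul]
        have hbd := boundary_card hconn hreg he hwk
        have hbd' : ((Finset.univ.filter
            (fun w' => G.Adj w w' ∧ rad G u₀ u₁ w' = k+1)).card : ℝ) ≤ (d:ℝ)-1 := by
          have hdcast : ((d-1:ℕ):ℝ) = (d:ℝ) - 1 := by
            rw [Nat.cast_sub (by omega), Nat.cast_one]
          rw [← hdcast]
          exact_mod_cast hbd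
        exact mul_le_mul_of_nonneg_right hbd' hc0
      · rw [if_neg hwk]
        have heq : ∀ w', (if G.Adj w w' then err w w' else 0) = 0 := by
          intro w'
          by_cases hadj : G.Adj w w'
          · rw [if_pos hadj]
            show (if ρ w = k ∧ ρ w' = k+1 then c else 0) = _
            rw [if_neg (fun hco => hwk hco.1)]
          · rw [if_neg hadj]
        rw [Finset.sum_congr rfl (fun w' _ => heq w'), Finset.sum_const_zero]
    calc E1 ≤ ∑ w, if ρ w = k then ((d:ℝ)-1) * c else 0 :=
          Finset.sum_le_sum fun w _ => hinner w
      _ = ((shell G u₀ u₁ k).card : ℝ) * (((d:ℝ)-1) * c) := by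
        rw [Finset.sum_ite, Finset.sum_const, Finset.sum_const_zero, add_zero,
          nsmul_eq_mul]
        rfl
  -- Step D: combine with the norm bound
  have hnorm := norm_lower (k := k) hconn hreg hd he hs hr0 hrs hs2
  set T : ℝ := ((shell G u₀ u₁ k).card : ℝ) * (r^k)^2 with hT
  have hT0 : 0 ≤ T := by positivity
  have hE1' : E1 ≤ 4 * (s^3 * T) := by
    calc E1 ≤ ((shell G u₀ u₁ k).card : ℝ) * (((d:ℝ)-1) * c) := stepB
      _ = 4 * (s^3 * T) + 4 * s * T * (((d:ℝ)-1) - s^2) := by rw [hc, hT]; ring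
      _ = 4 * (s^3 * T) := by rw [← hs2]; ring
  have hfin : 2 * E1 ≤ 8 * s^3 / ((k:ℝ)+1) * (∑ w, (testF G u₀ u₁ k r w)^2) := by
    have hk1 : (0:ℝ) < (k:ℝ)+1 := by positivity
    rw [div_mul_eq_mul_div, le_div_iff₀ hk1]
    calc 2 * E1 * ((k:ℝ)+1) ≤ (2 * (4 * (s^3 * T))) * ((k:ℝ)+1) :=
          mul_le_mul_of_nonneg_right (by linarith [hE1']) (le_of_lt hk1)
      _ = 8 * s^3 * (((k:ℝ)+1) * T) := by ring
      _ ≤ 8 * s^3 * (∑ w, (testF G u₀ u₁ k r w)^2) :=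
          mul_le_mul_of_nonneg_left hnorm (by positivity)
  linarith [stepA, hfin]

end OneEdge

variable {G : SimpleGraph (Fin n)}

lemma dist_of_edist {k : ℕ} (hconn : G.Connected) {u v : Fin n}
    (h : ((k : ℕ) : ℕ∞) ≤ G.edist u v) : k ≤ G.dist u v := by
  have hne : G.edist u v ≠ ⊤ := edist_ne_top_iff_reachable.mpr (hconn.preconnected u v)
  rw [SimpleGraph.dist]
  have := ENat.toNat_le_toNat h hne
  simpa using this

lemma sep {k : ℕ} (hconn : G.Connected) {u₀ u₁ v₀ v₁ : Fin n}
    (h00 : 2*k+2 ≤ G.dist u₀ v₀) (h01 : 2*k+2 ≤ G.dist u₀ v₁)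
    (h10 : 2*k+2 ≤ G.dist u₁ v₀) (h11 : 2*k+2 ≤ G.dist u₁ v₁)
    {w w' : Fin n} (hww' : G.dist w w' ≤ 1)
    (h1 : rad G u₀ u₁ w ≤ k) (h2 : rad G v₀ v₁ w' ≤ k) : False := by
  rw [rad] at h1 h2
  have tri : ∀ a b : Fin n, G.dist a b ≤ G.dist a w + G.dist w w' + G.dist b w' := by
    intro a b
    have t1 : G.dist a b ≤ G.dist a w' + G.dist w' b := hconn.dist_triangle
    have t2 : G.dist a w' ≤ G.dist a w + G.dist w w' := hconn.dist_triangle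
    have t3 : G.dist w' b = G.dist b w' := SimpleGraph.dist_comm
    omega
  have t00 := tri u₀ v₀
  have t01 := tri u₀ v₁
  have t10 := tri u₁ v₀
  have t11 := tri u₁ v₁
  omega

lemma tv_nonneg (k : ℕ) {r : ℝ} (hr0 : 0 < r) (a : ℕ) : 0 ≤ tv k r a := by
  rw [tv]
  split
  · positivity
  · exact le_refl 0

lemma tv_ne_zero {k : ℕ} {r : ℝ} {a : ℕ} (h : tv k r a ≠ 0) : a ≤ k := by
  by_contra hc
  exact h (if_neg hc)

lemma tv_zero_of (k : ℕ) (r : ℝ) : tv k r 0 = 1 := by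
  rw [tv, if_pos (Nat.zero_le k), pow_zero]

end Auxiliary

/-- Let `d ≥ 2`, `k ≥ 1`, and let `G` be an `n`-vertex connected
`d`-regular graph containing two edges `u₀u₁` and `v₀v₁` at distance at least `2k+2`
(all four endpoint distances are at least `2k+2`). Then
`(√(d-1)+1)²·λ₂(G) ≤ (√(d-1)-1)²·λₙ(G) + 4(d-1)^{3/2}/(k+1)`. -/
theorem stmt8 {n : ℕ} (d k : ℕ) (hd : 2 ≤ d) (hk : 1 ≤ k)
    (G : SimpleGraph (Fin n)) (hconn : G.Connected)
    (hreg : G.IsRegularOfDegree d)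
    (u₀ u₁ v₀ v₁ : Fin n) (he : G.Adj u₀ u₁) (hf : G.Adj v₀ v₁)
    (h00 : ((2 * k + 2 : ℕ) : ℕ∞) ≤ G.edist u₀ v₀)
    (h01 : ((2 * k + 2 : ℕ) : ℕ∞) ≤ G.edist u₀ v₁)
    (h10 : ((2 * k + 2 : ℕ) : ℕ∞) ≤ G.edist u₁ v₀)
    (h11 : ((2 * k + 2 : ℕ) : ℕ∞) ≤ G.edist u₁ v₁) :
    (Real.sqrt ((d : ℝ) - 1) + 1) ^ 2 * lapEig G 2 ≤
      (Real.sqrt ((d : ℝ) - 1) - 1) ^ 2 * lapEig G n +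
        4 * ((d : ℝ) - 1) ^ ((3 : ℝ) / 2) / ((k : ℝ) + 1) := by
  have h1n : 1 < n := by
    rw [← Fintype.card_fin n]
    exact Fintype.one_lt_card_iff_nontrivial.mpr ⟨⟨u₀, u₁, he.ne⟩⟩
  have h0n : 0 < n := by omega
  have hd2 : (2:ℝ) ≤ (d:ℝ) := by exact_mod_cast hd
  set s : ℝ := Real.sqrt ((d:ℝ) - 1) with hsdef
  have hs2 : s^2 = (d:ℝ) - 1 := Real.sq_sqrt (by linarith)
  have hsnn : 0 ≤ s := Real.sqrt_nonneg _
  have hs : 1 ≤ s := by nlinarith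
  have hs0 : 0 < s := by linarith
  set r : ℝ := s⁻¹ with hrdef
  have hr0 : 0 < r := by positivity
  have hrs : r * s = 1 := inv_mul_cancel₀ (ne_of_gt hs0)
  -- distances in ℕ
  have hd00 : 2*k+2 ≤ G.dist u₀ v₀ := dist_of_edist hconn h00
  have hd01 : 2*k+2 ≤ G.dist u₀ v₁ := dist_of_edist hconn h01
  have hd10 : 2*k+2 ≤ G.dist u₁ v₀ := dist_of_edist hconn h10
  have hd11 : 2*k+2 ≤ G.dist u₁ v₁ := dist_of_edist hconn h11
  set F := testF G u₀ u₁ k r with hFdef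
  set Fh := testFh G u₀ u₁ k r with hFhdef
  set Gf := testF G v₀ v₁ k r with hGdef
  set Gh := testFh G v₀ v₁ k r with hGhdef
  have hFnn : ∀ w, 0 ≤ F w := fun w => tv_nonneg k hr0 _
  have hGnn : ∀ w, 0 ≤ Gf w := fun w => tv_nonneg k hr0 _
  have hF1 : F u₀ = 1 := by rw [hFdef, testF, rad_self₀, tv_zero_of]
  have hG1 : Gf v₀ = 1 := by rw [hGdef, testF, rad_self₀, tv_zero_of]
  have hsep : ∀ w w', G.dist w w' ≤ 1 → F w = 0 ∨ Gf w' = 0 := by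
    intro w w' hdw
    by_contra hcon
    push_neg at hcon
    exact sep hconn hd00 hd01 hd10 hd11 hdw (tv_ne_zero hcon.1) (tv_ne_zero hcon.2)
  have hdist_self : ∀ w : Fin n, G.dist w w ≤ 1 := by
    intro w; rw [SimpleGraph.dist_self]; omega
  have hdist_adj : ∀ w w', G.Adj w w' → G.dist w w' ≤ 1 := fun w w' h =>
    le_of_eq ((G.dist_eq_one_iff_adj).mpr h)
  set α := ∑ w, Gf w with hαdef
  set β := ∑ w, F w with hβdef
  set x : Fin n → ℝ := fun w => α * F w - β * Gf w with hxdef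
  set y : Fin n → ℝ := fun w => α * Fh w + β * Gh w with hydef
  -- signed versions
  have hFh : ∀ w, Fh w = (-1)^(rad G u₀ u₁ w) * F w := fun w => rfl
  have hGh : ∀ w, Gh w = (-1)^(rad G v₀ v₁ w) * Gf w := fun w => rfl
  have hFh2 : ∀ w, (Fh w)^2 = (F w)^2 := by
    intro w
    rw [hFh w, mul_pow, neg_one_pow_sq, one_mul]
  have hGh2 : ∀ w, (Gh w)^2 = (Gf w)^2 := by
    intro w
    rw [hGh w, mul_pow, neg_one_pow_sq, one_mul]
  -- pointwise squares
  have hFG0 : ∀ w, F w * Gf w = 0 := by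
    intro w
    rcases hsep w w (hdist_self w) with h | h
    · rw [h, zero_mul]
    · rw [h, mul_zero]
  have hptx : ∀ w, (x w)^2 = α^2 * (F w)^2 + β^2 * (Gf w)^2 := by
    intro w
    show (α * F w - β * Gf w)^2 = _
    linear_combination (-2*α*β) * hFG0 w
  have hpty : ∀ w, (y w)^2 = α^2 * (F w)^2 + β^2 * (Gf w)^2 := by
    intro w
    have h0 : Fh w * Gh w = 0 := by
      rw [hFh w, hGh w]
      linear_combination ((-1:ℝ)^(rad G u₀ u₁ w) * (-1)^(rad G v₀ v₁ w)) * hFG0 w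
    show (α * Fh w + β * Gh w)^2 = _
    rw [← hFh2 w, ← hGh2 w]
    linear_combination (2*α*β) * h0
  have hNdef : ∑ w, (x w)^2 = α^2 * (∑ w, (F w)^2) + β^2 * (∑ w, (Gf w)^2) := by
    rw [Finset.mul_sum, Finset.mul_sum, ← Finset.sum_add_distrib]
    exact Finset.sum_congr rfl fun w _ => hptx w
  set N := ∑ w, (x w)^2 with hNdef2
  have hNy : ∑ w, (y w)^2 = N := by
    rw [hNdef2]
    exact Finset.sum_congr rfl fun w _ => (hpty w).trans (hptx w).symm
  have hsumx : ∑ w, x w = 0 := by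
    calc ∑ w, x w = (∑ w, α * F w) - ∑ w, β * Gf w := Finset.sum_sub_distrib _ _
      _ = α * β - β * α := by rw [← Finset.mul_sum, ← Finset.mul_sum]
      _ = 0 := by ring
  have hGfu₀ : Gf u₀ = 0 := by
    rcases hsep u₀ u₀ (hdist_self u₀) with h | h
    · rw [hF1] at h; norm_num at h
    · exact h
  have hα1 : 1 ≤ α := by
    have := Finset.single_le_sum (f := Gf) (fun w _ => hGnn w) (Finset.mem_univ v₀)
    rw [hG1] at this
    exact this
  have hxu₀ : x u₀ = α := by
    show α * F u₀ - β * Gf u₀ = α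
    rw [hF1, hGfu₀]; ring
  have hN0 : 0 < N := by
    have h1 : (x u₀)^2 ≤ N :=
      Finset.single_le_sum (f := fun w => (x w)^2) (fun w _ => sq_nonneg _)
        (Finset.mem_univ u₀)
    rw [hxu₀] at h1
    nlinarith
  -- quadratic forms
  have hA : (G.lapMatrix ℝ).IsHermitian := (posSemidef_lapMatrix ℝ G).1
  have hquad : ∀ z : Fin n → ℝ, z ⬝ᵥ ((G.lapMatrix ℝ) *ᵥ z)
      = (∑ w, ∑ w', if G.Adj w w' then (z w - z w')^2 else 0) / 2 := by
    intro z
    rw [← Matrix.toLinearMap₂'_apply', lapMatrix_toLinearMap₂']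
  -- edge splitting
  have hzz : ∀ w w', G.Adj w w' →
      (Gf w = 0 ∧ Gf w' = 0) ∨ (F w = 0 ∧ F w' = 0) := by
    intro w w' hadj
    by_cases hFc : F w = 0 ∧ F w' = 0
    · right; exact hFc
    · left
      rcases not_and_or.mp hFc with h | h
      · constructor
        · rcases hsep w w (hdist_self w) with h' | h'
          · exact absurd h' h
          · exact h'
        · rcases hsep w w' (hdist_adj w w' hadj) with h' | h'
          · exact absurd h' h
          · exact h'
      · constructor
        · rcases hsep w' w (hdist_adj w' w hadj.symm) with h' | h'
          · exact absurd h' h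
          · exact h'
        · rcases hsep w' w' (hdist_self w') with h' | h'
          · exact absurd h' h
          · exact h'
  have hsplit_x : ∀ w w', G.Adj w w' →
      (x w - x w')^2 = α^2*(F w - F w')^2 + β^2*(Gf w - Gf w')^2 := by
    intro w w' hadj
    have cross : (F w - F w')*(Gf w - Gf w') = 0 := by
      rcases hzz w w' hadj with ⟨h1, h2⟩ | ⟨h1, h2⟩ <;> rw [h1, h2] <;> ring
    show (α * F w - β * Gf w - (α * F w' - β * Gf w'))^2 = _
    linear_combination (-2*α*β) * cross
  have hsplit_y : ∀ w w', G.Adj w w' →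
      (y w - y w')^2 = α^2*(Fh w - Fh w')^2 + β^2*(Gh w - Gh w')^2 := by
    intro w w' hadj
    have cross : (Fh w - Fh w')*(Gh w - Gh w') = 0 := by
      rcases hzz w w' hadj with ⟨h1, h2⟩ | ⟨h1, h2⟩
      · have g1 : Gh w = 0 := by rw [hGh w, h1, mul_zero]
        have g2 : Gh w' = 0 := by rw [hGh w', h2, mul_zero]
        rw [g1, g2]; ring
      · have g1 : Fh w = 0 := by rw [hFh w, h1, mul_zero]
        have g2 : Fh w' = 0 := by rw [hFh w', h2, mul_zero]
        rw [g1, g2]; ring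
    show (α * Fh w + β * Gh w - (α * Fh w' + β * Gh w'))^2 = _
    linear_combination (2*α*β) * cross
  -- splitting of quadratic forms
  have hQsplit : ∀ (z f g : Fin n → ℝ),
      (∀ w w', G.Adj w w' → (z w - z w')^2 = α^2*(f w - f w')^2 + β^2*(g w - g w')^2) →
      (∑ w, ∑ w', if G.Adj w w' then (z w - z w')^2 else 0)
        = α^2 * (∑ w, ∑ w', if G.Adj w w' then (f w - f w')^2 else 0)
          + β^2 * (∑ w, ∑ w', if G.Adj w w' then (g w - g w')^2 else 0) := by
    intro z f g hpt
    rw [Finset.mul_sum, Finset.mul_sum, ← Finset.sum_add_distrib]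
    refine Finset.sum_congr rfl fun w _ => ?_
    rw [Finset.mul_sum, Finset.mul_sum, ← Finset.sum_add_distrib]
    refine Finset.sum_congr rfl fun w' _ => ?_
    by_cases hadj : G.Adj w w'
    · rw [if_pos hadj, if_pos hadj, if_pos hadj]
      exact hpt w w' hadj
    · rw [if_neg hadj, if_neg hadj, if_neg hadj]
      ring
  have hQx := hQsplit x F Gf hsplit_x
  have hQy := hQsplit y Fh Gh hsplit_y
  -- one-edge inequalities
  have hQF := oneEdge_quad (k := k) hconn hreg hd he hs hr0 hrs hs2
  have hQG := oneEdge_quad (k := k) hconn hreg hd hf hs hr0 hrs hs2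
  rw [← hFdef, ← hFhdef] at hQF
  rw [← hGdef, ← hGhdef] at hQG
  -- eigenvalue bounds
  have hn1 : n - 1 < n := by omega
  have hlam2 := lap_lambda2 G hconn h1n x hsumx
  have hlamN := quad_le_max (G.lapMatrix ℝ) hA hn1 y
  have hyy : y ⬝ᵥ y = N := by
    rw [dotProduct, ← hNy]
    exact Finset.sum_congr rfl fun w _ => (pow_two (y w)).symm
  have hxx : x ⬝ᵥ x = N := by
    rw [dotProduct, hNdef2]
    exact Finset.sum_congr rfl fun w _ => (pow_two (x w)).symm
  rw [hxx, hquad x] at hlam2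
  rw [hyy, hquad y] at hlamN
  -- combine
  set lam2 := sortedEigs (G.lapMatrix ℝ) ⟨1, h1n⟩ with hlam2def
  set lamN := sortedEigs (G.lapMatrix ℝ) ⟨n-1, hn1⟩ with hlamNdef
  set QF := ∑ w, ∑ w', if G.Adj w w' then (F w - F w')^2 else 0 with hQFdef
  set QFh := ∑ w, ∑ w', if G.Adj w w' then (Fh w - Fh w')^2 else 0 with hQFhdef
  set QG := ∑ w, ∑ w', if G.Adj w w' then (Gf w - Gf w')^2 else 0 with hQGdef
  set QGh := ∑ w, ∑ w', if G.Adj w w' then (Gh w - Gh w')^2 else 0 with hQGhdef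
  set Qx := ∑ w, ∑ w', if G.Adj w w' then (x w - x w')^2 else 0 with hQxdef
  set Qy := ∑ w, ∑ w', if G.Adj w w' then (y w - y w')^2 else 0 with hQydef
  set nF := ∑ w, (F w)^2 with hnFdef
  set nG := ∑ w, (Gf w)^2 with hnGdef
  -- now: hQF : (s+1)^2 * QF ≤ (s-1)^2 * QFh + 8*s^3/(k+1) * nF, etc.
  have e1 : α^2 * ((s+1)^2 * QF) ≤ α^2 * ((s-1)^2 * QFh + 8 * s^3 / ((k:ℝ)+1) * nF) :=
    mul_le_mul_of_nonneg_left hQF (sq_nonneg α)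
  have e2 : β^2 * ((s+1)^2 * QG) ≤ β^2 * ((s-1)^2 * QGh + 8 * s^3 / ((k:ℝ)+1) * nG) :=
    mul_le_mul_of_nonneg_left hQG (sq_nonneg β)
  have key : (s+1)^2 * Qx ≤ (s-1)^2 * Qy + 8 * s^3 / ((k:ℝ)+1) * N := by
    rw [hQx, hQy, hNdef]
    linarith [e1, e2]
  have m1 : (s+1)^2 * (lam2 * N) ≤ (s+1)^2 * (Qx / 2) :=
    mul_le_mul_of_nonneg_left hlam2 (sq_nonneg _)
  have m2 : (s-1)^2 * (Qy / 2) ≤ (s-1)^2 * (lamN * N) :=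
    mul_le_mul_of_nonneg_left hlamN (sq_nonneg _)
  have hmulform : ((s+1)^2 * lam2) * N ≤ ((s-1)^2 * lamN + 4 * s^3 / ((k:ℝ)+1)) * N := by
    have h8 : 8 * s^3 / ((k:ℝ)+1) = 2 * (4 * s^3 / ((k:ℝ)+1)) := by ring
    rw [h8] at key
    linarith [key, m1, m2]
  have hdivform : (s+1)^2 * lam2 ≤ (s-1)^2 * lamN + 4 * s^3 / ((k:ℝ)+1) :=
    le_of_mul_le_mul_right hmulform hN0
  -- translate to lapEig and rpow
  have hl2 : lapEig G 2 = lam2 := by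
    have h : (2:ℕ) - 1 < n := by omega
    rw [lapEig, dif_pos h]
  have hlN : lapEig G n = lamN := by
    rw [lapEig, dif_pos hn1]
  have hrpow : ((d:ℝ)-1) ^ ((3:ℝ)/2) = s^3 := by
    have h0 : (0:ℝ) ≤ (d:ℝ)-1 := by linarith
    rw [hsdef, show ((3:ℝ)/2) = ((1:ℝ)/2) * (3:ℕ) by norm_num,
      Real.rpow_mul h0, Real.rpow_natCast, ← Real.sqrt_eq_rpow]
  rw [hl2, hlN, hrpow]
  exact hdivform
end
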